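/- Let x₁ ≥ x₂ ≥ ⋯ ≥ x_a be positive integers with each xᵢ ≥ Δ, and suppose x₁ + ⋯ + x_a + R ∈ [m, m + Δ] for some R ≥ 0 and x₁ + ⋯ + x_{i-1} + n·xᵢ ≥ m for each i ≤ a (where a ≤ n). Then for each i, setting M = m + Δ - (x₁ + ⋯ + x_{i-1}), we have M/(n+1) ≤ xᵢ ≤ M; in particular if xᵢ is constrained to lie in a C-log-sparse set, there are at most C·(log₂(n+1)+1) possible values for xᵢ given x₁, ..., x_{i-1}. -/

import Mathlib

/-- A set of positive integers is `C`-log-sparse if every dyadic interval `[x, 2x)`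
contains at most `C` of its elements. -/
def LogSparse (C : ℕ) (T : Set ℕ) : Prop :=
  (∀ t ∈ T, 0 < t) ∧ ∀ x : ℕ, 0 < x → (T ∩ Set.Ico x (2 * x)).ncard ≤ C

/-- The sumset `S 0 + S 1 + ⋯ + S (n-1)`. -/
def sumSet {n : ℕ} (S : Fin n → Set ℕ) : Set ℕ :=
  {s | ∃ x : Fin n → ℕ, (∀ i, x i ∈ S i) ∧ ∑ i, x i = s}

/-- The arithmetic progression `{a, a+d, …, a+(k-1)d}` of length `k`. -/
def AP (a d k : ℕ) : Set ℕ := {m | ∃ i < k, m = a + i * d}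

lemma dyadic_finite (T : Set ℕ) (z : ℝ) :
    (T ∩ {v : ℕ | z ≤ (v : ℝ) ∧ (v : ℝ) < 2 * z}).Finite := by
  apply Set.Finite.subset (Set.finite_Iio (⌈2 * z⌉₊))
  intro v hv
  have := hv.2.2
  simp only [Set.mem_Iio]
  exact Nat.lt_ceil.mpr this

lemma dyadic_count (C : ℕ) (T : Set ℕ) (hT : LogSparse C T) (z : ℝ) (hz : 0 < z) :
    (T ∩ {v : ℕ | z ≤ (v : ℝ) ∧ (v : ℝ) < 2 * z}).ncard ≤ C := by
  have hce : 0 < ⌈z⌉₊ := Nat.ceil_pos.mpr hz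
  refine le_trans (Set.ncard_le_ncard ?_ ?_) (hT.2 ⌈z⌉₊ hce)
  · rintro v ⟨hvT, hv1, hv2⟩
    refine ⟨hvT, Nat.ceil_le.mpr hv1, ?_⟩
    have : (v : ℝ) < 2 * ⌈z⌉₊ := lt_of_lt_of_le hv2 (by
      have := Nat.le_ceil z; linarith)
    exact_mod_cast this
  · exact Set.Finite.subset (Set.finite_Ico _ _) (Set.inter_subset_right)

lemma range_finite (T : Set ℕ) (y : ℝ) (K : ℕ) :
    (T ∩ {v : ℕ | y ≤ (v : ℝ) ∧ (v : ℝ) < y * 2 ^ (K + 1)}).Finite := by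
  apply Set.Finite.subset (Set.finite_Iio (⌈y * 2 ^ (K + 1)⌉₊))
  intro v hv
  exact Nat.lt_ceil.mpr hv.2.2

lemma range_count (C : ℕ) (T : Set ℕ) (hT : LogSparse C T) (y : ℝ) (hy : 0 < y) (K : ℕ) :
    (T ∩ {v : ℕ | y ≤ (v : ℝ) ∧ (v : ℝ) < y * 2 ^ (K + 1)}).ncard ≤ C * (K + 1) := by
  induction K with
  | zero =>
      simpa [mul_comm] using dyadic_count C T hT y hy
  | succ K ih =>
      have hsub : (T ∩ {v : ℕ | y ≤ (v : ℝ) ∧ (v : ℝ) < y * 2 ^ (K + 2)}) ⊆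
          (T ∩ {v : ℕ | y ≤ (v : ℝ) ∧ (v : ℝ) < y * 2 ^ (K + 1)}) ∪
          (T ∩ {v : ℕ | y * 2 ^ (K + 1) ≤ (v : ℝ) ∧ (v : ℝ) < 2 * (y * 2 ^ (K + 1))}) := by
        rintro v ⟨hvT, hv1, hv2⟩
        rcases lt_or_ge (v : ℝ) (y * 2 ^ (K + 1)) with h | h
        · exact Or.inl ⟨hvT, hv1, h⟩
        · refine Or.inr ⟨hvT, h, ?_⟩
          have : y * 2 ^ (K + 2) = 2 * (y * 2 ^ (K + 1)) := by ring
          linarith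
      calc (T ∩ {v : ℕ | y ≤ (v : ℝ) ∧ (v : ℝ) < y * 2 ^ (K + 2)}).ncard
          ≤ ((T ∩ {v : ℕ | y ≤ (v : ℝ) ∧ (v : ℝ) < y * 2 ^ (K + 1)}) ∪
            (T ∩ {v : ℕ | y * 2 ^ (K + 1) ≤ (v : ℝ) ∧ (v : ℝ) < 2 * (y * 2 ^ (K + 1))})).ncard := by
            exact Set.ncard_le_ncard hsub ((range_finite T y K).union (dyadic_finite T _))
        _ ≤ (T ∩ {v : ℕ | y ≤ (v : ℝ) ∧ (v : ℝ) < y * 2 ^ (K + 1)}).ncard +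
            (T ∩ {v : ℕ | y * 2 ^ (K + 1) ≤ (v : ℝ) ∧ (v : ℝ) < 2 * (y * 2 ^ (K + 1))}).ncard :=
            Set.ncard_union_le _ _
        _ ≤ C * (K + 1) + C :=
            Nat.add_le_add ih (dyadic_count C T hT _ (by positivity))
        _ = C * (K + 2) := by ring

lemma key_count (C n : ℕ) (T : Set ℕ) (hT : LogSparse C T) (M : ℝ) (hM : 0 < M) :
    ((T ∩ {v : ℕ | M / ((n : ℝ) + 1) ≤ (v : ℝ) ∧ (v : ℝ) ≤ M}).ncard : ℝ)
      ≤ (C : ℝ) * (Real.logb 2 ((n : ℝ) + 1) + 1) := by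
  set K := Nat.log 2 (n + 1) with hK
  set y := M / ((n : ℝ) + 1) with hy
  have hn1 : (0 : ℝ) < (n : ℝ) + 1 := by positivity
  have hy0 : 0 < y := by positivity
  have hpow : (n : ℕ) + 1 < 2 ^ (K + 1) := Nat.lt_pow_succ_log_self (by norm_num) (n + 1)
  have hpowle : (2 : ℕ) ^ K ≤ n + 1 := Nat.pow_log_le_self 2 (Nat.succ_ne_zero n)
  have hMy : M = y * ((n : ℝ) + 1) := by rw [hy, div_mul_cancel₀]; exact hn1.ne'
  have hsub : (T ∩ {v : ℕ | y ≤ (v : ℝ) ∧ (v : ℝ) ≤ M}) ⊆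
      (T ∩ {v : ℕ | y ≤ (v : ℝ) ∧ (v : ℝ) < y * 2 ^ (K + 1)}) := by
    rintro v ⟨hvT, hv1, hv2⟩
    refine ⟨hvT, hv1, lt_of_le_of_lt hv2 ?_⟩
    rw [hMy]
    have : ((n : ℝ) + 1) < 2 ^ (K + 1) := by exact_mod_cast hpow
    exact mul_lt_mul_of_pos_left this hy0
  have h1 : (T ∩ {v : ℕ | y ≤ (v : ℝ) ∧ (v : ℝ) ≤ M}).ncard ≤ C * (K + 1) := by
    refine le_trans (Set.ncard_le_ncard hsub (range_finite T y K)) ?_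
    exact range_count C T hT y hy0 K
  have h2 : (K : ℝ) ≤ Real.logb 2 ((n : ℝ) + 1) := by
    have h2K : (2 : ℝ) ^ K ≤ (n : ℝ) + 1 := by exact_mod_cast hpowle
    calc (K : ℝ) = Real.logb 2 ((2 : ℝ) ^ K) := by
          rw [Real.logb_pow, Real.logb_self_eq_one (by norm_num)]; ring
      _ ≤ Real.logb 2 ((n : ℝ) + 1) :=
          Real.logb_le_logb_of_le (by norm_num) (by positivity) h2K
  calc ((T ∩ {v : ℕ | y ≤ (v : ℝ) ∧ (v : ℝ) ≤ M}).ncard : ℝ)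
      ≤ (C : ℝ) * ((K : ℝ) + 1) := by exact_mod_cast h1
    _ ≤ (C : ℝ) * (Real.logb 2 ((n : ℝ) + 1) + 1) := by
        apply mul_le_mul_of_nonneg_left (by linarith) (by positivity)

theorem large_terms_range (n a Δ m R : ℕ) (ha : a ≤ n)
    (x : ℕ → ℕ)
    (hdec : ∀ i j : ℕ, 1 ≤ i → i ≤ j → j ≤ a → x j ≤ x i)
    (hΔ : ∀ i : ℕ, 1 ≤ i → i ≤ a → Δ ≤ x i)
    (hpos : ∀ i : ℕ, 1 ≤ i → i ≤ a → 0 < x i)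
    (hsum_lo : m ≤ (∑ j ∈ Finset.Icc 1 a, x j) + R)
    (hsum_hi : (∑ j ∈ Finset.Icc 1 a, x j) + R ≤ m + Δ)
    (hlow : ∀ i : ℕ, 1 ≤ i → i ≤ a →
      m ≤ (∑ j ∈ Finset.Icc 1 (i - 1), x j) + n * x i) :
    ∀ i : ℕ, 1 ≤ i → i ≤ a →
      ((m + Δ - ∑ j ∈ Finset.Icc 1 (i - 1), x j : ℝ)) / ((n : ℝ) + 1) ≤ (x i : ℝ) ∧
      (x i : ℝ) ≤ ((m + Δ - ∑ j ∈ Finset.Icc 1 (i - 1), x j : ℝ)) ∧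
      ∀ C : ℕ, ∀ T : Set ℕ, LogSparse C T →
        ((T ∩ {v : ℕ | ((m + Δ - ∑ j ∈ Finset.Icc 1 (i - 1), x j : ℝ)) / ((n : ℝ) + 1) ≤ (v : ℝ) ∧
            (v : ℝ) ≤ ((m + Δ - ∑ j ∈ Finset.Icc 1 (i - 1), x j : ℝ))}).ncard : ℝ)
          ≤ (C : ℝ) * (Real.logb 2 ((n : ℝ) + 1) + 1) := by
  intro i hi1 hia
  -- upper bound in ℕ : (∑ j in Icc 1 (i-1), x j) + x i ≤ m + Δ
  have hsplit : (∑ j ∈ Finset.Icc 1 (i - 1), x j) + x i ≤ ∑ j ∈ Finset.Icc 1 a, x j := by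
    have hIcc : ∑ j ∈ Finset.Icc 1 i, x j = (∑ j ∈ Finset.Icc 1 (i - 1), x j) + x i := by
      have : i - 1 + 1 = i := Nat.succ_pred_eq_of_pos hi1
      rw [← this, Finset.sum_Icc_succ_top (by omega)]
      simp
    rw [← hIcc]
    apply Finset.sum_le_sum_of_subset
    exact Finset.Icc_subset_Icc le_rfl hia
  have hupN : (∑ j ∈ Finset.Icc 1 (i - 1), x j) + x i ≤ m + Δ := by
    omega
  have hup : (x i : ℝ) ≤ ((m : ℝ) + Δ - ∑ j ∈ Finset.Icc 1 (i - 1), x j) := by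
    have h : ((∑ j ∈ Finset.Icc 1 (i - 1), x j : ℕ) : ℝ) + (x i : ℝ) ≤ (m : ℝ) + Δ := by
      exact_mod_cast hupN
    push_cast at h ⊢
    linarith
  have hlowi := hlow i hi1 hia
  have hΔi := hΔ i hi1 hia
  have hlo : ((m : ℝ) + Δ - ∑ j ∈ Finset.Icc 1 (i - 1), x j) / ((n : ℝ) + 1) ≤ (x i : ℝ) := by
    rw [div_le_iff₀ (by positivity)]
    have h1 : (m : ℝ) ≤ ((∑ j ∈ Finset.Icc 1 (i - 1), x j : ℕ) : ℝ) + (n : ℝ) * x i := by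
      exact_mod_cast hlowi
    have h2 : (Δ : ℝ) ≤ x i := by exact_mod_cast hΔi
    push_cast at h1 ⊢
    nlinarith
  refine ⟨hlo, hup, ?_⟩
  intro C T hT
  have hM : (0 : ℝ) < (m : ℝ) + Δ - ∑ j ∈ Finset.Icc 1 (i - 1), x j := by
    have hxi : (0 : ℝ) < x i := by exact_mod_cast hpos i hi1 hia
    linarith
  exact key_count C n T hT _ hM
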